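/- Let T be a finite tree with a designated root, g_e > 0 strictly positive conductances on its edges, K = K_{1/g} the path-sum matrix with weights 1/g_e, and Σ_p a symmetric matrix indexed by the non-root vertices with all entries strictly positive. Set Σ_ε = K Σ_p K. Then for any non-root vertex a whose parent b is also non-root: Σ_ε(a,b) > Σ_ε(b,b). -/

import Mathlib

open Classical

/-- A finite tree with a designated root vertex (the slack bus). -/
structure GridTree (V : Type*) [Fintype V] [DecidableEq V] where
  graph : SimpleGraph V
  root : V
  isTree : graph.IsTree

namespace GridTree

variable {V : Type*} [Fintype V] [DecidableEq V] (T : GridTree V)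

/-- The unique path (as a walk) from a vertex to the root. -/
noncomputable def pathToRoot (a : V) : T.graph.Walk a T.root :=
  (T.isTree.existsUnique_path a T.root).choose

/-- `E_a`: the set of edges on the unique path from `a` to the root. -/
noncomputable def pathEdges (a : V) : Finset (Sym2 V) :=
  (T.pathToRoot a).edges.toFinset

/-- `c` is a descendant of `a`: `a` lies on the unique path from `c` to the root
(in particular every vertex is a descendant of itself). -/
def Descendant (c a : V) : Prop := a ∈ (T.pathToRoot c).support

/-- `b` is the parent of `a`: the edge `{a, b}` lies on the path from `a` to the root
(equivalently, `b` is the unique neighbor of `a` on that path). -/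
noncomputable def IsParent (a b : V) : Prop := s(a, b) ∈ T.pathEdges a

/-- The path-sum matrix `K_w`, indexed by the non-root vertices:
`K_w(a,b) = ∑_{e ∈ E_a ∩ E_b} w_e`. -/
noncomputable def pathMatrix (w : Sym2 V → ℝ) :
    Matrix {v : V // v ≠ T.root} {v : V // v ≠ T.root} ℝ :=
  fun a b => ∑ e ∈ T.pathEdges a.1 ∩ T.pathEdges b.1, w e

/-- The reduced weighted graph Laplacian with edge weights `w`, indexed by the
non-root vertices (the row and column of the root are deleted). -/
noncomputable def lap (w : Sym2 V → ℝ) :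
    Matrix {v : V // v ≠ T.root} {v : V // v ≠ T.root} ℝ :=
  fun a b =>
    if a = b then ∑ c ∈ Finset.univ.filter (fun c => T.graph.Adj a.1 c), w s(a.1, c)
    else if T.graph.Adj a.1 b.1 then - w s(a.1, b.1) else 0

end GridTree

namespace GridTree
variable {V : Type*} [Fintype V] [DecidableEq V] (T : GridTree V)

lemma pathToRoot_isPath (a : V) : (T.pathToRoot a).IsPath :=
  (T.isTree.existsUnique_path a T.root).choose_spec.1

lemma parent_struct {a b : V} (hab : T.IsParent a b) :
    ∃ h : T.graph.Adj a b, T.pathToRoot a = SimpleGraph.Walk.cons h (T.pathToRoot b) := by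
  have hp := T.pathToRoot_isPath a
  have hmem : s(a, b) ∈ (T.pathToRoot a).edges := by
    simpa [GridTree.IsParent, GridTree.pathEdges] using hab
  cases hq : T.pathToRoot a with
  | nil =>
      rw [hq] at hmem; simp at hmem
  | cons h' q =>
      rename_i c
      rw [hq] at hmem hp
      rw [SimpleGraph.Walk.cons_isPath_iff] at hp
      rw [SimpleGraph.Walk.edges_cons, List.mem_cons] at hmem
      have hbc : b = c := by
        rcases hmem with h1 | h2
        · exact (Sym2.congr_right.mp h1)
        · exfalso
          have := q.fst_mem_support_of_mem_edges h2
          exact hp.2 this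
      subst hbc
      refine ⟨h', ?_⟩
      have : q = T.pathToRoot b :=
        (T.isTree.existsUnique_path b T.root).choose_spec.2 q hp.1
      rw [this]

lemma parent_edges {a b : V} (hab : T.IsParent a b) :
    T.pathEdges a = insert s(a,b) (T.pathEdges b) ∧ s(a,b) ∉ T.pathEdges b := by
  obtain ⟨h, heq⟩ := T.parent_struct hab
  constructor
  · simp [GridTree.pathEdges, heq]
  · intro hmem
    have hp := T.pathToRoot_isPath a
    rw [heq, SimpleGraph.Walk.cons_isPath_iff] at hp
    have : s(a,b) ∈ (T.pathToRoot b).edges := by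
      simpa [GridTree.pathEdges] using hmem
    exact hp.2 ((T.pathToRoot b).fst_mem_support_of_mem_edges this)

lemma pathEdges_subset (a : V) : ∀ e ∈ T.pathEdges a, e ∈ T.graph.edgeSet := by
  intro e he
  rw [GridTree.pathEdges, List.mem_toFinset] at he
  exact (T.pathToRoot a).edges_subset_edgeSet he

lemma pathEdges_nonempty {b : V} (hb : b ≠ T.root) : (T.pathEdges b).Nonempty := by
  cases hq : T.pathToRoot b with
  | nil => exact absurd rfl hb
  | cons h' q =>
      rename_i c
      refine ⟨s(b, c), ?_⟩
      rw [GridTree.pathEdges, hq, List.mem_toFinset, SimpleGraph.Walk.edges_cons]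
      exact List.mem_cons_self

end GridTree

/-- In the DC-resistive model `Σ_ε = K Σ_p K` with `K = K_{1/g}` and
`Σ_p` symmetric entrywise positive, for a non-root vertex `a` with non-root parent `b`:
`Σ_ε(a,b) > Σ_ε(b,b)`. -/
theorem sigma_eps_parent_entry_gt_parent_diag
    {V : Type*} [Fintype V] [DecidableEq V] (T : GridTree V)
    (g : Sym2 V → ℝ) (hg : ∀ e ∈ T.graph.edgeSet, 0 < g e)
    (Sp : Matrix {v : V // v ≠ T.root} {v : V // v ≠ T.root} ℝ)
    (hsym : Sp.IsSymm) (hpos : ∀ i j, 0 < Sp i j)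
    (a b : {v : V // v ≠ T.root}) (hab : T.IsParent a.1 b.1) :
    (T.pathMatrix (fun e => (g e)⁻¹) * Sp * T.pathMatrix (fun e => (g e)⁻¹)) a b >
      (T.pathMatrix (fun e => (g e)⁻¹) * Sp * T.pathMatrix (fun e => (g e)⁻¹)) b b := by
  set K := T.pathMatrix (fun e => (g e)⁻¹) with hK
  obtain ⟨hEa, hnm⟩ := T.parent_edges hab
  have hw : ∀ x : {v : V // v ≠ T.root}, ∀ e ∈ T.pathEdges x.1, 0 < (g e)⁻¹ := by
    intro x e he
    exact inv_pos.mpr (hg e (T.pathEdges_subset x.1 e he))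
  have hsub : T.pathEdges b.1 ⊆ T.pathEdges a.1 := by
    rw [hEa]; exact Finset.subset_insert _ _
  have hKnn : ∀ x y : {v : V // v ≠ T.root}, 0 ≤ K x y := by
    intro x y
    apply Finset.sum_nonneg
    intro e he
    exact le_of_lt (hw x e (Finset.mem_inter.mp he).1)
  have hmono : ∀ i : {v : V // v ≠ T.root}, K b i ≤ K a i := by
    intro i
    apply Finset.sum_le_sum_of_subset_of_nonneg
    · exact Finset.inter_subset_inter_right hsub
    · intro e he _
      exact le_of_lt (hw a e (Finset.mem_inter.mp he).1)
  have hstrict : K b a < K a a := by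
    have h1 : T.pathEdges b.1 ∩ T.pathEdges a.1 = T.pathEdges b.1 :=
      Finset.inter_eq_left.mpr hsub
    have h2 : T.pathEdges a.1 ∩ T.pathEdges a.1 = T.pathEdges a.1 := Finset.inter_self _
    simp only [hK, GridTree.pathMatrix]
    rw [h1, h2, hEa, Finset.sum_insert hnm]
    have : 0 < (g s(a.1, b.1))⁻¹ := by
      apply hw a
      rw [hEa]; exact Finset.mem_insert_self _ _
    linarith
  have hKbb : 0 < K b b := by
    simp only [hK, GridTree.pathMatrix]
    rw [Finset.inter_self]
    exact Finset.sum_pos (fun e he => hw b e he) (T.pathEdges_nonempty b.2)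
  show (K * Sp * K) b b < (K * Sp * K) a b
  simp only [Matrix.mul_apply]
  apply Finset.sum_lt_sum
  · intro j _
    apply mul_le_mul_of_nonneg_right _ (hKnn j b)
    apply Finset.sum_le_sum
    intro i _
    exact mul_le_mul_of_nonneg_right (hmono i) (le_of_lt (hpos i j))
  · refine ⟨b, Finset.mem_univ b, ?_⟩
    apply mul_lt_mul_of_pos_right _ hKbb
    apply Finset.sum_lt_sum
    · intro i _
      exact mul_le_mul_of_nonneg_right (hmono i) (le_of_lt (hpos i b))
    · exact ⟨a, Finset.mem_univ a, mul_lt_mul_of_pos_right hstrict (hpos a b)⟩
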